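/- (Center amplitudes and peak-to-background bound for the fundamental rogue wave.) Let ρ₁, ρ₂, k₁, k₂, γ be real constants, p₀ = p₀ᵣ + i·p₀ᵢ ∈ ℂ with p₀ᵣ > 0, and let A, B, L be the fundamental rogue wave given by ℓ₁ = x + 2p₀ᵢt, ℓ₂ = −2p₀ᵣt, ζ₀ = 1/(4p₀ᵣ²), â_j = p₀ᵣ/(p₀ᵣ² + (p₀ᵢ − k_j)²), b̂_j = (k_j − p₀ᵢ)/(p₀ᵣ² + (p₀ᵢ − k_j)²), ρ̂_j = ρ_j·e^{i(k_j x + (γ + k_j²)t)} for j=1,2, A = ρ̂₁·[1 − (2i(â₁ℓ₂ − b̂₁ℓ₁) + (â₁² + b̂₁²))/(ℓ₁² + ℓ₂² + ζ₀)], B = ρ̂₂·[1 − (2i(â₂ℓ₂ − b̂₂ℓ₁) + (â₂² + b̂₂²))/(ℓ₁² + ℓ₂² + ζ₀)], L = γ + 4(ℓ₁² − ℓ₂² − ζ₀)/(ℓ₁² + ℓ₂² + ζ₀)². Then at the origin (x,t) = (0,0): |A(0,0)| = |ρ₁|·|1 − 4p₀ᵣ²/(p₀ᵣ² + (p₀ᵢ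 − k₁)²)|, |B(0,0)| = |ρ₂|·|1 − 4p₀ᵣ²/(p₀ᵣ² + (p₀ᵢ − k₂)²)|, L(0,0) = γ − 16p₀ᵣ²; moreover the peak-to-background ratios satisfy |A(0,0)| ≤ 3|ρ₁| and |B(0,0)| ≤ 3|ρ₂|. -/

import Mathlib

open Complex

noncomputable section

/-- `ℓ₁ = x + 2 p₀ᵢ t`. -/
def ell1 (p₀ : ℂ) (x t : ℝ) : ℝ := x + 2 * p₀.im * t

/-- `ℓ₂ = −2 p₀ᵣ t`. -/
def ell2 (p₀ : ℂ) (t : ℝ) : ℝ := -2 * p₀.re * t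

/-- `ζ₀ = 1/(4 p₀ᵣ²)`. -/
def zeta0 (p₀ : ℂ) : ℝ := 1 / (4 * p₀.re ^ 2)

/-- `â_j = p₀ᵣ/(p₀ᵣ² + (p₀ᵢ − k_j)²)`. -/
def ahat (p₀ : ℂ) (kj : ℝ) : ℝ := p₀.re / (p₀.re ^ 2 + (p₀.im - kj) ^ 2)

/-- `b̂_j = (k_j − p₀ᵢ)/(p₀ᵣ² + (p₀ᵢ − k_j)²)`. -/
def bhat (p₀ : ℂ) (kj : ℝ) : ℝ := (kj - p₀.im) / (p₀.re ^ 2 + (p₀.im - kj) ^ 2)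

/-- `ρ̂_j(x,t) = ρ_j e^{i(k_j x + (γ + k_j²)t)}`. -/
def rhohat (ρj kj γ : ℝ) (x t : ℝ) : ℂ :=
  (ρj : ℂ) * Complex.exp (Complex.I * ((kj * x + (γ + kj ^ 2) * t : ℝ) : ℂ))

/-- A fundamental rogue-wave short-wave component. -/
def fundSW (ρj kj γ : ℝ) (p₀ : ℂ) (x t : ℝ) : ℂ :=
  rhohat ρj kj γ x t *
    (1 - (2 * Complex.I * ((ahat p₀ kj * ell2 p₀ t - bhat p₀ kj * ell1 p₀ x t : ℝ) : ℂ)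
            + ((ahat p₀ kj ^ 2 + bhat p₀ kj ^ 2 : ℝ) : ℂ))
        / ((ell1 p₀ x t ^ 2 + ell2 p₀ t ^ 2 + zeta0 p₀ : ℝ) : ℂ))

/-- The fundamental rogue-wave long-wave component. -/
def fundL (γ : ℝ) (p₀ : ℂ) (x t : ℝ) : ℝ :=
  γ + 4 * (ell1 p₀ x t ^ 2 - ell2 p₀ t ^ 2 - zeta0 p₀)
      / (ell1 p₀ x t ^ 2 + ell2 p₀ t ^ 2 + zeta0 p₀) ^ 2

/-- `Q(p) = δ₁ρ₁²/(p − ik₁) + δ₂ρ₂²/(p − ik₂) + ip²`. -/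
def QQ (δ₁ δ₂ ρ₁ ρ₂ k₁ k₂ : ℝ) (p : ℂ) : ℂ :=
  ((δ₁ * ρ₁ ^ 2 : ℝ) : ℂ) / (p - Complex.I * k₁)
    + ((δ₂ * ρ₂ ^ 2 : ℝ) : ℂ) / (p - Complex.I * k₂) + Complex.I * p ^ 2

lemma abs_fundSW_origin (ρ k γ : ℝ) (p₀ : ℂ) (hre : 0 < p₀.re) :
    ‖fundSW ρ k γ p₀ 0 0‖
      = |ρ| * |1 - 4 * p₀.re ^ 2 / (p₀.re ^ 2 + (p₀.im - k) ^ 2)| := by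
  have hD : 0 < p₀.re ^ 2 + (p₀.im - k) ^ 2 := by positivity
  have key : fundSW ρ k γ p₀ 0 0
      = ((ρ * (1 - 4 * p₀.re ^ 2 / (p₀.re ^ 2 + (p₀.im - k) ^ 2)) : ℝ) : ℂ) := by
    simp only [fundSW, rhohat, ell1, ell2, zeta0, ahat, bhat]
    push_cast
    norm_num
    left
    have hz : (4 : ℂ) * (p₀.re : ℂ) ^ 2 ≠ 0 := by
      simp [pow_eq_zero_iff]
      exact_mod_cast hre.ne'
    have hDc : ((p₀.re : ℂ) ^ 2 + ((p₀.im : ℂ) - k) ^ 2) ≠ 0 := by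
      have : ((p₀.re ^ 2 + (p₀.im - k) ^ 2 : ℝ) : ℂ) ≠ 0 := by exact_mod_cast hD.ne'
      push_cast at this; convert this using 2 <;> ring
    field_simp
    ring
  rw [key, Complex.norm_real, Real.norm_eq_abs, abs_mul]
lemma ratio_bounds (p₀ : ℂ) (k : ℝ) (hre : 0 < p₀.re) :
    |1 - 4 * p₀.re ^ 2 / (p₀.re ^ 2 + (p₀.im - k) ^ 2)| ≤ 3 := by
  have hD : 0 < p₀.re ^ 2 + (p₀.im - k) ^ 2 := by positivity
  rw [abs_le]
  constructor
  · have : 4 * p₀.re ^ 2 / (p₀.re ^ 2 + (p₀.im - k) ^ 2) ≤ 4 := by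
      rw [div_le_iff₀ hD]; nlinarith [sq_nonneg (p₀.im - k)]
    linarith
  · have : 0 ≤ 4 * p₀.re ^ 2 / (p₀.re ^ 2 + (p₀.im - k) ^ 2) := by positivity
    linarith

theorem stmt_10 (ρ₁ ρ₂ k₁ k₂ γ : ℝ) (p₀ : ℂ) (hre : 0 < p₀.re) :
    ‖fundSW ρ₁ k₁ γ p₀ 0 0‖
      = |ρ₁| * |1 - 4 * p₀.re ^ 2 / (p₀.re ^ 2 + (p₀.im - k₁) ^ 2)| ∧
    ‖fundSW ρ₂ k₂ γ p₀ 0 0‖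
      = |ρ₂| * |1 - 4 * p₀.re ^ 2 / (p₀.re ^ 2 + (p₀.im - k₂) ^ 2)| ∧
    fundL γ p₀ 0 0 = γ - 16 * p₀.re ^ 2 ∧
    ‖fundSW ρ₁ k₁ γ p₀ 0 0‖ ≤ 3 * |ρ₁| ∧
    ‖fundSW ρ₂ k₂ γ p₀ 0 0‖ ≤ 3 * |ρ₂| := by
  have h1 := abs_fundSW_origin ρ₁ k₁ γ p₀ hre
  have h2 := abs_fundSW_origin ρ₂ k₂ γ p₀ hre
  refine ⟨h1, h2, ?_, ?_, ?_⟩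
  · simp only [fundL, ell1, ell2, zeta0]
    have h : p₀.re ^ 2 ≠ 0 := by positivity
    field_simp
    ring
  · rw [h1, mul_comm]
    exact mul_le_mul_of_nonneg_right (ratio_bounds p₀ k₁ hre) (abs_nonneg _)
  · rw [h2, mul_comm]
    exact mul_le_mul_of_nonneg_right (ratio_bounds p₀ k₂ hre) (abs_nonneg _)
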